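/- In a loop with the left inverse property satisfying C14, inverses of products with squares obey (x·(y·y))⁻¹ = y⁻¹·(y⁻¹·x⁻¹), where x⁻¹ denotes the two-sided inverse e/x = x\e. -/
import Mathlib


/-- A loop: a set with multiplication, left division `ldiv` (written `\`),
right division `rdiv` (written `/`), and a two-sided identity `e`. -/
structure Loop (α : Type) where
  mul : α → α → α
  ldiv : α → α → α
  rdiv : α → α → α
  e : α
  mul_ldiv : ∀ a b, mul a (ldiv a b) = b
  rdiv_mul : ∀ a b, mul (rdiv b a) a = b
  ldiv_mul : ∀ a b, ldiv a (mul a b) = b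
  mul_rdiv : ∀ a b, rdiv (mul b a) a = b
  e_mul : ∀ a, mul e a = a
  mul_e : ∀ a, mul a e = a

theorem stmt_13 (α : Type) (L : Loop α) (lip : ∀ x y : α, L.mul (L.rdiv L.e x) (L.mul x y) = y) (h : ∀ x y z : α, L.mul x (L.mul y (L.mul y z)) = L.mul (L.mul x (L.mul y y)) z) :
    ∀ x y : α, L.rdiv L.e (L.mul x (L.mul y y)) = L.mul (L.rdiv L.e y) (L.mul (L.rdiv L.e y) (L.rdiv L.e x)) := by
  intro x y
  set i : α → α := fun a => L.rdiv L.e a with hi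
  -- inverse is involutive
  have inv_mul : ∀ a, L.mul (i a) a = L.e := fun a => L.rdiv_mul a L.e
  have inv_inv : ∀ a, i (i a) = a := by
    intro a
    have := lip (i a) a
    rw [inv_mul, L.mul_e] at this
    exact this
  have mul_inv : ∀ a, L.mul a (i a) = L.e := by
    intro a
    have := inv_mul (i a)
    rw [inv_inv] at this
    exact this
  have key : ∀ a w, L.mul a (L.mul (i a) w) = w := by
    intro a w
    have := lip (i a) w
    rw [show L.rdiv L.e (i a) = a from inv_inv a] at this
    exact this
  set A := L.mul (i y) (L.mul (i y) (i x)) with hA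
  have h1 : L.mul (L.mul x (L.mul y y)) A = L.e := by
    rw [← h x y A, hA, key, key, mul_inv]
  have := lip (L.mul x (L.mul y y)) A
  rw [h1, L.mul_e] at this
  exact this
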